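/- arXiv:0806.3834 — 3 statements merged into one kernel-verified Lean document; each statement's English description precedes it below -/
import Mathlib

section
/- If (x,y,z) ∈ ℝ³ stabilizes |ψ⟩ ∈ ℂ², then (z, −(x+y)/√2, (x−y)/√2) stabilizes HT|ψ⟩, where H is the Hadamard matrix and T the π/8 gate. -/
open Matrix

noncomputable section

abbrev Mat := Matrix (Fin 2) (Fin 2) ℂ

/-- The Hadamard gate. -/
def Hg : Mat := ((Real.sqrt 2)⁻¹ : ℝ) • !![1, 1; 1, -1]

/-- The phase gate. -/
def Pg : Mat := !![1, 0; 0, Complex.I]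

/-- The π/8 gate. -/
def Tg : Mat := !![1, 0; 0, Complex.exp ((Real.pi / 4 : ℝ) * Complex.I)]

/-- The Pauli matrices. -/
def Xg : Mat := !![0, 1; 1, 0]
def Yg : Mat := !![0, -Complex.I; Complex.I, 0]
def Zg : Mat := !![1, 0; 0, -1]

/-- (x,y,z) stabilizes v iff (xX+yY+zZ)v = v. -/
def Stabilizes (x y z : ℝ) (v : Fin 2 → ℂ) : Prop :=
  ((x : ℂ) • Xg + (y : ℂ) • Yg + (z : ℂ) • Zg).mulVec v = v

lemma exp_pi4' : Complex.exp ((Real.pi : ℂ) / 4 * Complex.I)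
    = (Real.sqrt 2 : ℂ) / 2 * (1 + Complex.I) := by
  rw [show (Real.pi : ℂ) / 4 = ((Real.pi / 4 : ℝ) : ℂ) by push_cast; ring,
    Complex.exp_mul_I, ← Complex.ofReal_cos, ← Complex.ofReal_sin,
    Real.cos_pi_div_four, Real.sin_pi_div_four]
  push_cast; ring

lemma comm_key (x y z : ℝ) :
    ((z : ℂ) • Xg + ((-((x + y) / Real.sqrt 2) : ℝ) : ℂ) • Yg
      + (((x - y) / Real.sqrt 2 : ℝ) : ℂ) • Zg) * (Hg * Tg)
    = (Hg * Tg) * ((x : ℂ) • Xg + (y : ℂ) • Yg + (z : ℂ) • Zg) := by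
  have hsq : (Real.sqrt 2 : ℂ) * (Real.sqrt 2 : ℂ) = 2 := by
    exact_mod_cast Real.mul_self_sqrt (by norm_num : (0:ℝ) ≤ 2)
  have h2 : (Real.sqrt 2 : ℂ) ^ 2 = 2 := by rw [sq, hsq]
  have h3 : (Real.sqrt 2 : ℂ) ^ 3 = 2 * (Real.sqrt 2 : ℂ) := by rw [pow_succ, h2]
  have h4 : (Real.sqrt 2 : ℂ) ^ 4 = 4 := by
    rw [show ((Real.sqrt 2:ℝ):ℂ)^4 = ((Real.sqrt 2:ℝ):ℂ)^2*((Real.sqrt 2:ℝ):ℂ)^2 from by ring, h2]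
    norm_num
  have hinv : ((Real.sqrt 2 : ℝ) : ℂ)⁻¹ = (Real.sqrt 2 : ℂ) / 2 := by
    refine inv_eq_of_mul_eq_one_right ?_
    rw [mul_div_assoc', hsq]; norm_num
  ext i j
  fin_cases i <;> fin_cases j <;>
  · simp [Hg, Tg, Xg, Yg, Zg, Matrix.mul_apply, Fin.sum_univ_two]
    simp only [exp_pi4']
    simp only [hinv, div_eq_mul_inv]
    ring_nf
    simp only [Complex.I_sq, h2, h3, h4]
    ring

/-- If (x,y,z) stabilizes |ψ⟩ then (z, −(x+y)/√2, (x−y)/√2) stabilizes HT|ψ⟩. -/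
theorem stabilizer_transition_HT (x y z : ℝ) (ψ : Fin 2 → ℂ)
    (h : Stabilizes x y z ψ) :
    Stabilizes z (-((x + y) / Real.sqrt 2)) ((x - y) / Real.sqrt 2)
      ((Hg * Tg).mulVec ψ) := by
  unfold Stabilizes at h ⊢
  rw [Matrix.mulVec_mulVec, comm_key, ← Matrix.mulVec_mulVec, h]
end
end

section
/- Every matrix in the group ⟨H, P, T⟩ generated by the Hadamard, phase, and π/8 gates can be written in normal form: as W_n·T·W_{n-1}·T···T·W₁·T·W₀ for some n ≥ 0, where W_n ∈ {I, H, PH}, W_i ∈ {H, PH} for 1 ≤ i ≤ n−1, and W₀ is in the Clifford group C₁. -/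
open Matrix

noncomputable section

/-- The set of matrices computed by circuits over {H, P}: the Clifford group C₁. -/
def C1 : Set Mat := Submonoid.closure ({Hg, Pg} : Set Mat)

/-- The matrix Wₙ·T·Wₙ₋₁·T···W₁·T·W₀ where ws = [Wₙ, …, W₁] (the number of
T-factors is the length of ws; for ws = [] the product is just W₀). -/
def nfProd (ws : List Mat) (W0 : Mat) : Mat :=
  ws.foldr (fun w acc => w * Tg * acc) W0

/-- (ws, W₀) is a normal form: the leading factor Wₙ is in {I, H, PH}, the
intermediate factors are in {H, PH}, and W₀ is in the Clifford group. -/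
def IsNF (ws : List Mat) (W0 : Mat) : Prop :=
  W0 ∈ C1 ∧ (∀ w ∈ ws.head?, w = 1 ∨ w = Hg ∨ w = Pg * Hg) ∧
    (∀ w ∈ ws.tail, w = Hg ∨ w = Pg * Hg)

/-! ### Auxiliary definitions and scalar lemmas -/

def ω : ℂ := Complex.exp ((Real.pi / 4 : ℝ) * Complex.I)

def ωI : Mat := ω • (1 : Mat)

lemma Tg_eq : Tg = !![1, 0; 0, ω] := rfl

lemma s2 : (Real.sqrt 2 : ℂ) * (Real.sqrt 2 : ℂ) = 2 := by
  norm_cast; rw [Real.mul_self_sqrt] <;> norm_num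

lemma om_eq : ω = (1 + Complex.I) / (Real.sqrt 2 : ℂ) := by
  rw [ω, show ((Real.pi / 4 : ℝ) : ℂ) * Complex.I = (Real.pi/4 : ℝ) * Complex.I from rfl,
    Complex.exp_mul_I, ← Complex.ofReal_cos, ← Complex.ofReal_sin,
    Real.cos_pi_div_four, Real.sin_pi_div_four]
  have := s2
  field_simp
  ring_nf
  push_cast
  linear_combination (1 + Complex.I) / 2 * this

lemma om2 : ω * ω = Complex.I := by
  rw [om_eq]; field_simp
  linear_combination (-Complex.I) * s2 + Complex.I_sq

lemma om8 : ω ^ 8 = 1 := by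
  have h : ω ^ 8 = (ω * ω) ^ 4 := by ring
  rw [h, om2]
  simp [pow_succ, Complex.I_mul_I]

/-! ### Matrix identities -/

lemma HH : Hg * Hg = 1 := by
  have h := s2
  ext i j
  fin_cases i <;> fin_cases j <;>
    simp [Hg, Matrix.mul_apply, Fin.sum_univ_two, Complex.real_smul, Matrix.one_apply]
  all_goals try field_simp
  all_goals first | linear_combination h | linear_combination -2*h | linear_combination 2*h | linear_combination -h | ring1

lemma TT : Tg * Tg = Pg := by
  ext i j
  fin_cases i <;> fin_cases j <;>
    simp [Tg_eq, Pg, Matrix.mul_apply, Fin.sum_univ_two]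
  all_goals first | linear_combination om2 | ring1

lemma PT : Pg * Tg = Tg * Pg := by
  ext i j
  fin_cases i <;> fin_cases j <;>
    simp [Tg_eq, Pg, Matrix.mul_apply, Fin.sum_univ_two] <;> ring

lemma Xg_eq : Xg = Hg * (Pg * (Pg * Hg)) := by
  have h := s2
  ext i j
  fin_cases i <;> fin_cases j <;>
    simp [Hg, Pg, Xg, Matrix.mul_apply, Fin.sum_univ_two, Complex.real_smul]
  all_goals try field_simp
  all_goals first | linear_combination h | linear_combination -2*h | linear_combination 2*h | linear_combination -h | linear_combination Complex.I * h | linear_combination (-Complex.I) * h | linear_combination ((Real.sqrt 2:ℝ):ℂ)⁻¹ * Complex.I_sq | linear_combination (-((Real.sqrt 2:ℝ):ℂ)⁻¹) * Complex.I_sq | linear_combination -Complex.I_sq | linear_combination h + Complex.I_sq | ring1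

lemma PPH : Pg * (Pg * Hg) = Hg * Xg := by
  ext i j
  fin_cases i <;> fin_cases j <;>
    simp [Hg, Pg, Xg, Matrix.mul_apply, Fin.sum_univ_two, Complex.real_smul]
  all_goals first | ring1 | linear_combination Complex.I_sq | linear_combination ((Real.sqrt 2:ℝ):ℂ)⁻¹ * Complex.I_sq | linear_combination (-((Real.sqrt 2:ℝ):ℂ)⁻¹) * Complex.I_sq

lemma omI_word : ωI = Hg * Pg * (Hg * Pg) * (Hg * Pg) := by
  have h := s2
  have h3 := om_eq
  ext i j
  fin_cases i <;> fin_cases j <;>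
    simp [Hg, Pg, ωI, Matrix.mul_apply, Fin.sum_univ_two, Complex.real_smul, Matrix.one_apply, h3]
  all_goals try field_simp
  all_goals first | ring1 | linear_combination ((1+Complex.I)*((Real.sqrt 2:ℝ):ℂ)) * s2 | linear_combination ((1+Complex.I)*((Real.sqrt 2:ℝ):ℂ)) * s2 + (2*((Real.sqrt 2:ℝ):ℂ))*Complex.I_sq | (have hI := Complex.I_sq; grind)

lemma XT : ωI * (Xg * Tg) = Tg * (Xg * Pg) := by
  ext i j
  fin_cases i <;> fin_cases j <;>
    simp [Tg_eq, Pg, Xg, ωI, Matrix.mul_apply, Fin.sum_univ_two, Matrix.one_apply]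
  all_goals first | linear_combination om2 | ring1

lemma HPH : Hg * (Pg * Hg) = (Pg * Hg) * (ωI * (Xg * (Pg * (Pg * Pg)))) := by
  have h := s2
  have h3 := om_eq
  ext i j
  fin_cases i <;> fin_cases j <;>
    simp [Hg, Pg, Xg, ωI, Matrix.mul_apply, Fin.sum_univ_two, Complex.real_smul, Matrix.one_apply, h3]
  all_goals try field_simp
  all_goals first | ring1 | linear_combination Complex.I_sq | linear_combination (1+Complex.I)*Complex.I_sq

/-! ### Commutation and algebraic consequences -/

lemma omI_comm (M : Mat) : Commute ωI M := by
  show ωI * M = M * ωI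
  rw [ωI, smul_mul_assoc, one_mul, mul_smul_comm, mul_one]

lemma omI8 : ωI ^ 8 = 1 := by
  rw [ωI, smul_pow, one_pow, om8, one_smul]

/-- `X·T = T·(ω⁻¹·X·P)`, in a form usable for rewriting. -/
lemma XTz (z : Mat) : Xg * (Tg * z) = Tg * (ωI^7 * (Xg * (Pg * z))) := by
  have key : Xg * Tg = ωI^7 * (Tg * (Xg * Pg)) := by
    have h8 : ωI^7 * (ωI * (Xg * Tg)) = Xg * Tg := by
      rw [← mul_assoc, ← pow_succ, omI8, one_mul]
    rw [← h8, XT]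
  calc Xg * (Tg * z) = (Xg * Tg) * z := by rw [mul_assoc]
    _ = (ωI^7 * (Tg * (Xg * Pg))) * z := by rw [key]
    _ = ωI^7 * (Tg * (Xg * (Pg * z))) := by simp only [mul_assoc]
    _ = Tg * (ωI^7 * (Xg * (Pg * z))) := by
        rw [← mul_assoc, ((omI_comm Tg).pow_left 7).eq, mul_assoc]

/-! ### Submonoid memberships -/

lemma Hg_mem : Hg ∈ Submonoid.closure ({Hg, Pg} : Set Mat) :=
  Submonoid.subset_closure (by simp)

lemma Pg_mem : Pg ∈ Submonoid.closure ({Hg, Pg} : Set Mat) :=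
  Submonoid.subset_closure (by simp)

lemma omI_memK : ωI ∈ Submonoid.closure ({ωI, Xg, Pg} : Set Mat) :=
  Submonoid.subset_closure (by simp)

lemma Xg_memK : Xg ∈ Submonoid.closure ({ωI, Xg, Pg} : Set Mat) :=
  Submonoid.subset_closure (by simp)

lemma Pg_memK : Pg ∈ Submonoid.closure ({ωI, Xg, Pg} : Set Mat) :=
  Submonoid.subset_closure (by simp)

lemma K_le : Submonoid.closure ({ωI, Xg, Pg} : Set Mat) ≤ Submonoid.closure ({Hg, Pg} : Set Mat) := by
  rw [Submonoid.closure_le]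
  rintro x hx
  simp only [Set.mem_insert_iff, Set.mem_singleton_iff] at hx
  rcases hx with rfl | rfl | rfl
  · rw [omI_word]
    exact SetLike.mem_coe.mpr
      (mul_mem (mul_mem (mul_mem Hg_mem Pg_mem) (mul_mem Hg_mem Pg_mem)) (mul_mem Hg_mem Pg_mem))
  · rw [Xg_eq]
    exact SetLike.mem_coe.mpr (mul_mem Hg_mem (mul_mem Pg_mem (mul_mem Pg_mem Hg_mem)))
  · exact SetLike.mem_coe.mpr Pg_mem

/-- T can be pushed left past any monomial Clifford. -/
lemma K_T : ∀ k ∈ Submonoid.closure ({ωI, Xg, Pg} : Set Mat),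
    ∃ k' ∈ Submonoid.closure ({ωI, Xg, Pg} : Set Mat), k * Tg = Tg * k' := by
  intro k hk
  induction hk using Submonoid.closure_induction_left with
  | one => exact ⟨1, one_mem _, by rw [one_mul, mul_one]⟩
  | mul_left x hx y hy ih =>
    obtain ⟨k', hk', he⟩ := ih
    simp only [Set.mem_insert_iff, Set.mem_singleton_iff] at hx
    rcases hx with rfl | rfl | rfl
    · refine ⟨ωI * k', mul_mem omI_memK hk', ?_⟩
      rw [mul_assoc, he, ← mul_assoc, (omI_comm Tg).eq, mul_assoc]
    · refine ⟨ωI^7 * (Xg * (Pg * k')), mul_mem (pow_mem omI_memK 7)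
        (mul_mem Xg_memK (mul_mem Pg_memK hk')), ?_⟩
      rw [mul_assoc, he, XTz]
    · refine ⟨Pg * k', mul_mem Pg_memK hk', ?_⟩
      rw [mul_assoc, he, ← mul_assoc, PT, mul_assoc]

/-- Every Clifford operator decomposes as W·k with W ∈ {1,H,PH} and k monomial. -/
lemma decomp : ∀ C ∈ Submonoid.closure ({Hg, Pg} : Set Mat),
    ∃ W k, (W = 1 ∨ W = Hg ∨ W = Pg * Hg) ∧
      k ∈ Submonoid.closure ({ωI, Xg, Pg} : Set Mat) ∧ C = W * k := by
  intro C hC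
  induction hC using Submonoid.closure_induction_left with
  | one => exact ⟨1, 1, Or.inl rfl, one_mem _, by rw [one_mul]⟩
  | mul_left x hx y hy ih =>
    obtain ⟨W, k, hW, hk, rfl⟩ := ih
    simp only [Set.mem_insert_iff, Set.mem_singleton_iff] at hx
    rcases hx with rfl | rfl
    · -- x = Hg
      rcases hW with rfl | rfl | rfl
      · exact ⟨Hg, k, Or.inr (Or.inl rfl), hk, by rw [one_mul]⟩
      · refine ⟨1, k, Or.inl rfl, hk, ?_⟩
        rw [← mul_assoc, HH, one_mul]
      · refine ⟨Pg * Hg, ωI * (Xg * (Pg * (Pg * (Pg * k)))), Or.inr (Or.inr rfl),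
          mul_mem omI_memK (mul_mem Xg_memK (mul_mem Pg_memK (mul_mem Pg_memK
            (mul_mem Pg_memK hk)))), ?_⟩
        calc Hg * ((Pg * Hg) * k) = (Hg * (Pg * Hg)) * k := (mul_assoc _ _ _).symm
          _ = ((Pg * Hg) * (ωI * (Xg * (Pg * (Pg * Pg))))) * k := by rw [HPH]
          _ = (Pg * Hg) * (ωI * (Xg * (Pg * (Pg * (Pg * k))))) := by
              simp only [mul_assoc]
    · -- x = Pg
      rcases hW with rfl | rfl | rfl
      · exact ⟨1, Pg * k, Or.inl rfl, mul_mem Pg_memK hk, by rw [one_mul, one_mul]⟩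
      · exact ⟨Pg * Hg, k, Or.inr (Or.inr rfl), hk, by rw [mul_assoc]⟩
      · refine ⟨Hg, Xg * k, Or.inr (Or.inl rfl), mul_mem Xg_memK hk, ?_⟩
        calc Pg * ((Pg * Hg) * k) = (Pg * (Pg * Hg)) * k := (mul_assoc _ _ _).symm
          _ = (Hg * Xg) * k := by rw [PPH]
          _ = Hg * (Xg * k) := by rw [mul_assoc]

/-- Pushing T through a Clifford operator. -/
lemma cliffT : ∀ C ∈ Submonoid.closure ({Hg, Pg} : Set Mat),
    ∃ W C', (W = 1 ∨ W = Hg ∨ W = Pg * Hg) ∧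
      C' ∈ Submonoid.closure ({Hg, Pg} : Set Mat) ∧ C * Tg = W * (Tg * C') := by
  intro C hC
  obtain ⟨W, k, hW, hk, rfl⟩ := decomp C hC
  obtain ⟨k', hk', he⟩ := K_T k hk
  exact ⟨W, k', hW, K_le hk', by rw [mul_assoc, he]⟩

/-! ### nfProd lemmas -/

lemma nfProd_mul (ws : List Mat) (A B : Mat) : nfProd ws (A * B) = nfProd ws A * B := by
  induction ws with
  | nil => rfl
  | cons w t ih =>
    show w * Tg * nfProd t (A * B) = (w * Tg * nfProd t A) * B
    rw [ih, ← mul_assoc]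

lemma nfProd_concat (ws : List Mat) (W W0 : Mat) :
    nfProd (ws ++ [W]) W0 = nfProd ws (W * Tg * W0) := by
  simp [nfProd, List.foldr_append]

/-! ### Main theorem -/

/-- Every matrix in ⟨H, P, T⟩ can be written in normal form. -/
theorem normal_form_exists :
    ∀ A ∈ Submonoid.closure ({Hg, Pg, Tg} : Set Mat),
      ∃ ws W0, IsNF ws W0 ∧ A = nfProd ws W0 := by
  intro A hA
  induction hA using Submonoid.closure_induction_right with
  | one =>
    refine ⟨[], 1, ⟨one_mem _, by simp, by simp⟩, rfl⟩
  | mul_right x hx y hy ih =>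
    obtain ⟨ws, W0, ⟨hW0, hhead, htail⟩, rfl⟩ := ih
    have hW0' : W0 ∈ Submonoid.closure ({Hg, Pg} : Set Mat) := hW0
    simp only [Set.mem_insert_iff, Set.mem_singleton_iff] at hy
    rcases hy with rfl | rfl | rfl
    · -- y = Hg
      exact ⟨ws, W0 * Hg, ⟨mul_mem hW0' Hg_mem, hhead, htail⟩, (nfProd_mul ws W0 Hg).symm⟩
    · -- y = Pg
      exact ⟨ws, W0 * Pg, ⟨mul_mem hW0' Pg_mem, hhead, htail⟩, (nfProd_mul ws W0 Pg).symm⟩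
    · -- y = Tg
      obtain ⟨W, C', hW, hC', he⟩ := cliffT W0 hW0'
      have base : nfProd ws W0 * Tg = nfProd ws (W0 * Tg) := (nfProd_mul ws W0 Tg).symm
      rcases hW with rfl | hW'
      · -- W = 1 : the T merges with the previous T (or starts a fresh block)
        have he' : W0 * Tg = Tg * C' := by rw [he, one_mul]
        rcases List.eq_nil_or_concat ws with rfl | ⟨init, wl, hws⟩
        · refine ⟨[1], C', ⟨hC', ?_, by simp⟩, ?_⟩
          · intro w hw
            simp only [List.head?_cons, Option.mem_some_iff] at hw
            exact Or.inl hw.symm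
          · show nfProd [] W0 * Tg = nfProd [1] C'
            show W0 * Tg = 1 * Tg * C'
            rw [he', one_mul]
        · -- ws = init ++ [wl]
          rw [List.concat_eq_append] at hws
          subst hws
          have hwl : wl = 1 ∨ wl = Hg ∨ wl = Pg * Hg := by
            cases init with
            | nil => exact hhead wl (by simp)
            | cons a t =>
              have := htail wl (by simp)
              tauto
          have hwlC1 : wl ∈ Submonoid.closure ({Hg, Pg} : Set Mat) := by
            rcases hwl with rfl | rfl | rfl
            · exact one_mem _
            · exact Hg_mem
            · exact mul_mem Pg_mem Hg_mem
          refine ⟨init, wl * (Pg * C'), ⟨mul_mem hwlC1 (mul_mem Pg_mem hC'), ?_, ?_⟩, ?_⟩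
          · -- head condition
            cases init with
            | nil => simp
            | cons a t =>
              intro w hw
              exact hhead w (by simpa using hw)
          · -- tail condition
            cases init with
            | nil => simp
            | cons a t =>
              intro w hw
              exact htail w (by simp [List.mem_append]; left; simpa using hw)
          · rw [base, he', nfProd_concat]
            congr 1
            rw [mul_assoc, ← mul_assoc Tg Tg C', TT]
      · -- W = Hg or W = Pg * Hg : a new T-stage is appended
        refine ⟨ws ++ [W], C', ⟨hC', ?_, ?_⟩, ?_⟩
        · -- head condition
          cases ws with
          | nil =>
            intro w hw
            simp only [List.nil_append, List.head?_cons, Option.mem_some_iff] at hw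
            subst hw
            exact Or.inr hW'
          | cons a t =>
            intro w hw
            exact hhead w (by simpa using hw)
        · -- tail condition
          cases ws with
          | nil => simp [hW']
          | cons a t =>
            intro w hw
            simp only [List.cons_append, List.tail_cons, List.mem_append,
              List.mem_singleton] at hw
            rcases hw with hw | rfl
            · exact htail w hw
            · exact hW'
        · rw [base, he, nfProd_concat, mul_assoc]
end
end

section
/- No normal form circuit containing at least one T-gate computes the identity: if n ≥ 1, W_n ∈ {I, H, PH}, W_i ∈ {H, PH} for 1 ≤ i < n, and W₀ ∈ C₁, then W_n·T·W_{n-1}·T···T·W₁·T·W₀ ≠ λ·I for λ = 1 (i.e., the product is not the identity matrix). -/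
open Matrix

noncomputable section

/-! ### auxiliary machinery -/

abbrev R2 := Zsqrtd 2

noncomputable def tr2 : R2 →+* ℝ := Zsqrtd.toReal (by norm_num)

lemma tr2_inj : Function.Injective tr2 :=
  Zsqrtd.toReal_injective _ (fun n h => by
    have := Int.Prime.dvd_mul' (p := 2) (by norm_num) (m := n) (n := n) (h ▸ dvd_refl 2)
    rcases this with h2 | h2 <;>
    · obtain ⟨k, rfl⟩ := h2
      push_cast at h
      have h2 : 2 * (k * k) = 1 := by linarith
      rcases Int.emod_two_eq k with hk | hk <;> omega)

/-- parity: reduction of `ℤ√2` modulo `√2`. -/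
def pa : R2 →+* ZMod 2 where
  toFun x := (x.re : ZMod 2)
  map_one' := by simp
  map_mul' x y := by
    show ((x.re * y.re + 2 * x.im * y.im : ℤ) : ZMod 2) = _
    push_cast
    have : (2 : ZMod 2) = 0 := rfl
    rw [this]; ring
  map_zero' := by simp
  map_add' x y := by push_cast [Zsqrtd.re_add]; ring

abbrev M3 := Matrix (Fin 3) (Fin 3) R2
abbrev M3F := Matrix (Fin 3) (Fin 3) (ZMod 2)

/-- entrywise parity of a matrix -/
def Pa (B : M3) : M3F := fun i j => pa (B i j)

lemma Pa_mul (A B : M3) : Pa (A * B) = Pa A * Pa B := by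
  ext i j
  simp [Pa, Matrix.mul_apply, map_sum, _root_.map_mul]

/-- The Pauli vector. -/
def σv : Fin 3 → Mat := ![Xg, Yg, Zg]

/-- `CRel S B n` : conjugation by `S` acts on the Pauli vector by `B / √2 ^ n`. -/
def CRel (S : Mat) (B : M3) (n : ℕ) : Prop :=
  ∀ j, (Real.sqrt 2 ^ n : ℝ) • (S * σv j) = ∑ k, tr2 (B k j) • (σv k * S)

lemma CRel.comp {U S : Mat} {C B : M3} {m n : ℕ}
    (hU : CRel U C m) (hS : CRel S B n) : CRel (U * S) (C * B) (m + n) := by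
  intro j
  have h1 : (Real.sqrt 2 ^ (m + n) : ℝ) • (U * S * σv j)
      = (Real.sqrt 2 ^ m : ℝ) • (U * ((Real.sqrt 2 ^ n : ℝ) • (S * σv j))) := by
    rw [Matrix.mul_smul, smul_smul, ← pow_add, Matrix.mul_assoc]
  rw [h1, hS j, Matrix.mul_sum, Finset.smul_sum]
  have h2 : ∀ k, (Real.sqrt 2 ^ m : ℝ) • (U * (tr2 (B k j) • (σv k * S)))
      = tr2 (B k j) • (((Real.sqrt 2 ^ m : ℝ) • (U * σv k)) * S) := by
    intro k
    rw [Matrix.mul_smul, smul_comm, Matrix.smul_mul, ← Matrix.mul_assoc]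
  simp only [h2]
  have h3 : ∀ k, tr2 (B k j) • ((∑ l, tr2 (C l k) • (σv l * U)) * S)
      = ∑ l, (tr2 (C l k) * tr2 (B k j)) • (σv l * (U * S)) := by
    intro k
    rw [Matrix.sum_mul, Finset.smul_sum]
    congr 1
    ext l
    rw [Matrix.smul_mul, smul_smul, mul_comm (tr2 (B k j)), Matrix.mul_assoc]
  have h4 : ∀ k : Fin 3, tr2 (B k j) • ((Real.sqrt 2 ^ m : ℝ) • (U * σv k) * S)
      = ∑ l, (tr2 (C l k) * tr2 (B k j)) • (σv l * (U * S)) := fun k => by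
    rw [hU k]; exact h3 k
  rw [Finset.sum_congr rfl (fun k _ => h4 k), Finset.sum_comm]
  refine Finset.sum_congr rfl (fun l _ => ?_)
  rw [← Finset.sum_smul]
  congr 1
  simp [Matrix.mul_apply, map_sum, _root_.map_mul]

lemma CRel.one : CRel 1 1 0 := by
  intro j
  simp [Matrix.one_apply, Finset.sum_ite_eq, tr2]

/-! ### base relations -/

def MH : M3 := !![0,0,1; 0,-1,0; 1,0,0]
def MP : M3 := !![0,-1,0; 1,0,0; 0,0,1]
def NP : M3 := !![0,1,0; -1,0,0; 0,0,1]
def BT : M3 := !![1,-1,0; 1,1,0; 0,0,Zsqrtd.sqrtd]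

def UH : M3F := !![0,0,0; 1,1,0; 1,1,0]
def UP : M3F := !![1,1,0; 0,0,0; 1,1,0]
def UT : M3F := !![1,1,0; 1,1,0; 0,0,0]

lemma omega_eq : Complex.exp ((Real.pi / 4 : ℝ) * Complex.I)
    = (Real.sqrt 2 / 2 : ℝ) * (1 + Complex.I) := by
  rw [Complex.exp_mul_I, ← Complex.ofReal_cos, ← Complex.ofReal_sin,
    Real.cos_pi_div_four, Real.sin_pi_div_four]
  push_cast; ring

lemma Tg_eq_s16 : Tg = !![1, 0; 0, (Real.sqrt 2 / 2 : ℝ) * (1 + Complex.I)] := by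
  rw [Tg, omega_eq]

lemma relH : CRel Hg MH 0 := by
  have h2 : Real.sqrt 2 * Real.sqrt 2 = 2 := Real.mul_self_sqrt (by norm_num)
  intro j
  fin_cases j <;>
    · simp [σv, Fin.sum_univ_three, MH, tr2, Matrix.smul_apply, Matrix.vecHead, Matrix.vecTail]
      ext i j
      fin_cases i <;> fin_cases j <;>
        simp [Hg, Xg, Yg, Zg, Matrix.mul_apply, Fin.sum_univ_two, Matrix.smul_apply] <;>
        (rw [Complex.ext_iff]; push_cast; constructor <;> simp <;> nlinarith [h2])

lemma relP : CRel Pg MP 0 := by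
  intro j
  fin_cases j <;>
    · simp [σv, Fin.sum_univ_three, MP, tr2, Matrix.smul_apply, Matrix.vecHead, Matrix.vecTail]
      ext i j
      fin_cases i <;> fin_cases j <;>
        simp [Pg, Xg, Yg, Zg, Matrix.mul_apply, Fin.sum_univ_two, Matrix.smul_apply]

lemma relT : CRel Tg BT 1 := by
  have h2 : Real.sqrt 2 * Real.sqrt 2 = 2 := Real.mul_self_sqrt (by norm_num)
  intro j
  rw [Tg_eq_s16]
  fin_cases j <;>
    · simp [σv, Fin.sum_univ_three, BT, tr2, Matrix.smul_apply, Matrix.vecHead, Matrix.vecTail]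
      ext i j
      fin_cases i <;> fin_cases j <;>
        simp [Xg, Yg, Zg, Matrix.mul_apply, Fin.sum_univ_two, Matrix.smul_apply] <;>
        (rw [Complex.ext_iff]; push_cast; constructor <;> simp <;> nlinarith [h2])

lemma relId : CRel 1 1 0 := by
  intro j
  simp [Matrix.one_apply, tr2, Fin.sum_univ_three]

/-! ### Clifford lemma -/

lemma MH_mul_MH : MH * MH = 1 := by decide

lemma MP_mul_NP : MP * NP = 1 := by decide

lemma clifford_rel {W : Mat} (hW : W ∈ C1) :
    ∃ M N : M3, CRel W M 0 ∧ M * N = 1 := by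
  induction hW using Submonoid.closure_induction with
  | mem w hw =>
    rcases hw with rfl | rfl
    · exact ⟨MH, MH, relH, MH_mul_MH⟩
    · exact ⟨MP, NP, relP, MP_mul_NP⟩
  | one => exact ⟨1, 1, relId, one_mul 1⟩
  | mul a b _ _ ha hb =>
    obtain ⟨Ma, Na, ra, ia⟩ := ha
    obtain ⟨Mb, Nb, rb, ib⟩ := hb
    refine ⟨Ma * Mb, Nb * Na, ra.comp rb, ?_⟩
    rw [Matrix.mul_assoc, ← Matrix.mul_assoc Mb, ib, Matrix.one_mul, ia]

/-! ### parity automaton -/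

lemma Pa_MHBT : Pa MH * Pa BT = UH := by decide
lemma Pa_MPMHBT : Pa (MP * MH) * Pa BT = UP := by decide
lemma Pa_BT : Pa BT = UT := by decide
lemma Pa_one : Pa 1 = 1 := by decide

lemma UHUH : UH * UH = UH := by decide
lemma UHUP : UH * UP = UH := by decide
lemma UPUH : UP * UH = UP := by decide
lemma UPUP : UP * UP = UP := by decide
lemma UTUH : UT * UH = UT := by decide
lemma UTUP : UT * UP = UT := by decide

/-- main induction over the tail syllables -/
lemma tail_rel (W0 : Mat) (M0 : M3) (h0 : CRel W0 M0 0) :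
    ∀ ws : List Mat, (∀ w ∈ ws, w = Hg ∨ w = Pg * Hg) →
    ∃ B : M3, CRel (nfProd ws W0) B ws.length ∧
      (Pa B = Pa M0 ∨ Pa B = UH * Pa M0 ∨ Pa B = UP * Pa M0) ∧
      (ws ≠ [] → (Pa B = UH * Pa M0 ∨ Pa B = UP * Pa M0)) := by
  intro ws
  induction ws with
  | nil => exact fun _ => ⟨M0, h0, Or.inl rfl, fun h => absurd rfl h⟩
  | cons w t ih =>
    intro hmem
    obtain ⟨B, rB, hpar, _⟩ := ih (fun x hx => hmem x (List.mem_cons_of_mem w hx))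
    rcases hmem w List.mem_cons_self with rfl | rfl
    · refine ⟨MH * BT * B, ?_, ?_, fun _ => ?_⟩
      · have : CRel (Hg * Tg * nfProd t W0) (MH * BT * B) (1 + 0 + t.length) :=
          CRel.comp (CRel.comp (m := 0) (n := 1) relH relT) rB
        simpa [nfProd, Nat.add_comm] using this
      · right; left
        rw [Pa_mul, Pa_mul, Pa_MHBT]
        rcases hpar with h | h | h <;> rw [h]
        · rw [← Matrix.mul_assoc, UHUH]
        · rw [← Matrix.mul_assoc, UHUP]
      · left
        rw [Pa_mul, Pa_mul, Pa_MHBT]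
        rcases hpar with h | h | h <;> rw [h]
        · rw [← Matrix.mul_assoc, UHUH]
        · rw [← Matrix.mul_assoc, UHUP]
    · refine ⟨MP * MH * BT * B, ?_, ?_, fun _ => ?_⟩
      · have : CRel (Pg * Hg * Tg * nfProd t W0) (MP * MH * BT * B) (0 + 0 + 1 + t.length) :=
          CRel.comp (CRel.comp (CRel.comp relP relH) relT) rB
        simpa [nfProd, Nat.add_comm] using this
      · right; right
        rw [Pa_mul, Pa_mul, Pa_MPMHBT]
        rcases hpar with h | h | h <;> rw [h]
        · rw [← Matrix.mul_assoc, UPUH]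
        · rw [← Matrix.mul_assoc, UPUP]
      · right
        rw [Pa_mul, Pa_mul, Pa_MPMHBT]
        rcases hpar with h | h | h <;> rw [h]
        · rw [← Matrix.mul_assoc, UPUH]
        · rw [← Matrix.mul_assoc, UPUP]

lemma tr2_sqrtd : tr2 Zsqrtd.sqrtd = Real.sqrt 2 := by
  simp [tr2]

lemma pa_sqrtd : pa Zsqrtd.sqrtd = 0 := rfl

/-- full normal form relation -/
lemma main_rel (ws : List Mat) (W0 : Mat) (hW : IsNF ws W0) (hne : ws ≠ []) :
    ∃ (B : M3) (U : M3F) (M0 N0 : M3), CRel (nfProd ws W0) B ws.length ∧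
      Pa B = U * Pa M0 ∧ M0 * N0 = 1 ∧ (U = UT ∨ U = UH ∨ U = UP) := by
  obtain ⟨hC1, hhead, htail⟩ := hW
  obtain ⟨M0, N0, r0, i0⟩ := clifford_rel hC1
  cases ws with
  | nil => exact absurd rfl hne
  | cons w t =>
    obtain ⟨B, rB, hpar, _⟩ := tail_rel W0 M0 r0 t htail
    have hlen : (w :: t).length = 1 + t.length := by simp [Nat.add_comm]
    rcases hhead w rfl with rfl | rfl | rfl
    · refine ⟨BT * B, UT, M0, N0, ?_, ?_, i0, Or.inl rfl⟩
      · have : CRel (Tg * nfProd t W0) (BT * B) (1 + t.length) := CRel.comp relT rB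
        simpa [nfProd, Nat.add_comm] using this
      · rw [Pa_mul, Pa_BT]
        rcases hpar with h | h | h <;> rw [h]
        · rw [← Matrix.mul_assoc, UTUH]
        · rw [← Matrix.mul_assoc, UTUP]
    · refine ⟨MH * BT * B, UH, M0, N0, ?_, ?_, i0, Or.inr (Or.inl rfl)⟩
      · have : CRel (Hg * Tg * nfProd t W0) (MH * BT * B) (1 + 0 + t.length) :=
          CRel.comp (CRel.comp (m := 0) (n := 1) relH relT) rB
        simpa [nfProd, Nat.add_comm] using this
      · rw [Pa_mul, Pa_mul, Pa_MHBT]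
        rcases hpar with h | h | h <;> rw [h]
        · rw [← Matrix.mul_assoc, UHUH]
        · rw [← Matrix.mul_assoc, UHUP]
    · refine ⟨MP * MH * BT * B, UP, M0, N0, ?_, ?_, i0, Or.inr (Or.inr rfl)⟩
      · have : CRel (Pg * Hg * Tg * nfProd t W0) (MP * MH * BT * B) (0 + 0 + 1 + t.length) :=
          CRel.comp (CRel.comp (CRel.comp relP relH) relT) rB
        simpa [nfProd, Nat.add_comm] using this
      · rw [Pa_mul, Pa_mul, Pa_MPMHBT]
        rcases hpar with h | h | h <;> rw [h]
        · rw [← Matrix.mul_assoc, UPUH]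
        · rw [← Matrix.mul_assoc, UPUP]

/-- No normal form with at least one T-gate computes the identity. -/
theorem normal_form_ne_identity (ws : List Mat) (W0 : Mat)
    (hW : IsNF ws W0) (hne : ws ≠ []) :
    nfProd ws W0 ≠ 1 := by
  intro hcon
  obtain ⟨B, U, M0, N0, hrel, hpar, hMN, hU⟩ := main_rel ws W0 hW hne
  rw [hcon] at hrel
  set n := ws.length with hn
  have hn1 : n ≠ 0 := Nat.pos_iff_ne_zero.mp (hn ▸ List.length_pos_iff.mpr hne)
  -- extract coordinates
  have hB : ∀ k j : Fin 3, B k j = Zsqrtd.sqrtd ^ n * (if k = j then 1 else 0) := by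
    intro k j
    apply tr2_inj
    rw [_root_.map_mul, map_pow, tr2_sqrtd]
    have hE := hrel j
    simp only [Matrix.one_mul, Matrix.mul_one] at hE
    have h0r := congrArg Complex.re (congrFun (congrFun hE 0) 0)
    have h0i := congrArg Complex.im (congrFun (congrFun hE 0) 0)
    have h1r := congrArg Complex.re (congrFun (congrFun hE 1) 0)
    have h1i := congrArg Complex.im (congrFun (congrFun hE 1) 0)
    fin_cases j <;> fin_cases k <;>
      simp [σv, Xg, Yg, Zg, Fin.sum_univ_three, Matrix.smul_apply, Matrix.sum_apply,
        Complex.real_smul, ← Complex.ofReal_pow] at h0r h0i h1r h1i ⊢ <;>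
      linarith [h0r, h0i, h1r, h1i]
  have hPaB : Pa B = 0 := by
    ext k j
    show pa (B k j) = 0
    rw [hB, _root_.map_mul, map_pow, pa_sqrtd, zero_pow hn1, zero_mul]

  rw [hPaB] at hpar
  have hU0 : U = 0 := by
    have h := congrArg (fun A => A * Pa N0) hpar
    simp only [Matrix.zero_mul] at h
    rw [Matrix.mul_assoc, ← Pa_mul, hMN, Pa_one, Matrix.mul_one] at h
    exact h.symm
  rcases hU with rfl | rfl | rfl <;> exact absurd hU0 (by decide)
end
end
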